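/- If G is a 14-regular graph on n vertices, then γ_{2,2}(G) ≤ n/2. -/

import Mathlib

open SimpleGraph Finset

def IsAbDom {V : Type*} [Fintype V] [DecidableEq V] (G : SimpleGraph V)
    [DecidableRel G.Adj] (a b : ℕ) (S : Finset V) : Prop :=
  (∀ v ∈ S, a ≤ (G.neighborFinset v ∩ S).card) ∧
  (∀ v ∉ S, b ≤ (G.neighborFinset v ∩ S).card)

section Aux
variable {V : Type*} [Fintype V] [DecidableEq V]

lemma split_sum (A : Finset V) (g : Finset V → ℕ) :
    ∑ R : Finset V, 2 ^ R.card * 3 ^ (Fintype.card V - R.card) * g (R ∩ A)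
      = (∑ P ∈ A.powerset, 2 ^ P.card * 3 ^ (A.card - P.card) * g P)
          * 5 ^ (Fintype.card V - A.card) := by
  have hAc : Fintype.card V - A.card = Aᶜ.card := (Finset.card_compl A).symm
  rw [hAc]
  have h5 : (5 : ℕ) ^ Aᶜ.card = ∑ Q ∈ Aᶜ.powerset, 2 ^ Q.card * 3 ^ (Aᶜ.card - Q.card) := by
    rw [Finset.sum_pow_mul_eq_add_pow]
  rw [h5, Finset.sum_mul_sum]
  rw [← Finset.sum_product']
  refine Finset.sum_nbij' (fun R => (R ∩ A, R ∩ Aᶜ)) (fun pq => pq.1 ∪ pq.2) ?_ ?_ ?_ ?_ ?_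
  · intro R _
    simp [Finset.mem_product, Finset.inter_subset_right]
  · intro pq _
    exact Finset.mem_univ _
  · intro R _
    simp only []
    rw [← Finset.inter_union_distrib_left, Finset.union_compl, Finset.inter_univ]
  · rintro ⟨P, Q⟩ hpq
    simp only [Finset.mem_product, Finset.mem_powerset] at hpq
    obtain ⟨hP, hQ⟩ := hpq
    have h1 : (P ∪ Q) ∩ A = P := by
      ext a
      simp only [Finset.mem_inter, Finset.mem_union]
      constructor
      · rintro ⟨h | h, ha⟩
        · exact h
        · exact absurd ha (Finset.mem_compl.1 (hQ h))
      · exact fun h => ⟨Or.inl h, hP h⟩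
    have h2 : (P ∪ Q) ∩ Aᶜ = Q := by
      ext a
      simp only [Finset.mem_inter, Finset.mem_union, Finset.mem_compl]
      constructor
      · rintro ⟨h | h, ha⟩
        · exact absurd (hP h) ha
        · exact h
      · exact fun h => ⟨Or.inr h, Finset.mem_compl.1 (hQ h)⟩
    simp [h1, h2]
  · intro R _
    simp only []
    have hsd : R ∩ Aᶜ = R \ A := by
      ext a; simp [Finset.mem_sdiff, Finset.mem_inter, Finset.mem_compl, and_comm]
    have hcard : (R ∩ A).card + (R ∩ Aᶜ).card = R.card := by
      rw [hsd]; exact Finset.card_inter_add_card_sdiff R A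
    have h1 : (R ∩ A).card ≤ A.card := Finset.card_le_card (Finset.inter_subset_right)
    have h2 : (R ∩ Aᶜ).card ≤ Aᶜ.card := Finset.card_le_card (Finset.inter_subset_right)
    have hn : A.card + Aᶜ.card = Fintype.card V := by
      rw [Finset.card_compl]
      have := Finset.card_le_univ A
      omega
    have hR : #R = #(R ∩ A) + #(R ∩ Aᶜ) := hcard.symm
    have hexp : Fintype.card V - #R = (#A - #(R ∩ A)) + (#Aᶜ - #(R ∩ Aᶜ)) := by omega
    rw [hexp, hR, pow_add, pow_add]
    ring
end Aux

section Main
variable {V : Type*} [Fintype V] [DecidableEq V]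

lemma total_sum :
    ∑ R : Finset V, 2 ^ R.card * 3 ^ (Fintype.card V - R.card) = 5 ^ Fintype.card V := by
  simpa using Fintype.sum_pow_mul_eq_add_pow V (2 : ℕ) 3

lemma card_sum :
    ∑ R : Finset V, 2 ^ R.card * 3 ^ (Fintype.card V - R.card) * R.card
      = Fintype.card V * (2 * 5 ^ (Fintype.card V - 1)) := by
  have hdecomp : ∀ R : Finset V, R.card = ∑ v : V, (R ∩ ({v} : Finset V)).card := by
    intro R
    have h1 : ∀ v : V, (R ∩ ({v} : Finset V)).card = if v ∈ R then 1 else 0 := by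
      intro v
      by_cases h : v ∈ R
      · rw [if_pos h]
        rw [Finset.inter_eq_right.2 (by simpa using h)]
        simp
      · rw [if_neg h]
        rw [Finset.card_eq_zero]
        ext a
        simp only [Finset.mem_inter, Finset.mem_singleton, Finset.notMem_empty, iff_false]
        rintro ⟨ha, rfl⟩; exact h ha
    simp only [h1]
    rw [Finset.sum_ite_mem, Finset.univ_inter, Finset.sum_const, smul_eq_mul, mul_one]
  calc ∑ R : Finset V, 2 ^ R.card * 3 ^ (Fintype.card V - R.card) * R.card
      = ∑ R : Finset V, ∑ v : V,
          2 ^ R.card * 3 ^ (Fintype.card V - R.card) * (R ∩ ({v} : Finset V)).card := by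
        refine Finset.sum_congr rfl fun R _ => ?_
        rw [← Finset.mul_sum, ← hdecomp]
    _ = ∑ v : V, ∑ R : Finset V,
          2 ^ R.card * 3 ^ (Fintype.card V - R.card) * (R ∩ ({v} : Finset V)).card :=
        Finset.sum_comm
    _ = ∑ v : V, (2 * 5 ^ (Fintype.card V - 1)) := by
        refine Finset.sum_congr rfl fun v _ => ?_
        rw [split_sum ({v} : Finset V) (fun P => P.card)]
        have hps : ({v} : Finset V).powerset = {∅, {v}} := by
          ext P; simp [Finset.subset_singleton_iff]
        rw [hps, Finset.sum_insert (by simpa using Ne.symm (Finset.singleton_ne_empty v)), Finset.sum_singleton]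
        simp
    _ = Fintype.card V * (2 * 5 ^ (Fintype.card V - 1)) := by
        rw [Finset.sum_const, smul_eq_mul, Finset.card_univ]

lemma inner_bad_sum (A : Finset V) (hA : A.card = 14) :
    ∑ P ∈ A.powerset, 2 ^ P.card * 3 ^ (A.card - P.card) * (if P.card ≤ 1 then 1 else 0)
      = 31 * 3 ^ 13 := by
  rw [Finset.powerset_card_disjiUnion]; erw [Finset.sum_disjiUnion]
  have hterm : ∀ j ∈ Finset.range (A.card + 1),
      ∑ P ∈ Finset.powersetCard j A,
        2 ^ P.card * 3 ^ (A.card - P.card) * (if P.card ≤ 1 then 1 else 0)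
      = Nat.choose 14 j * (2 ^ j * 3 ^ (14 - j) * (if j ≤ 1 then 1 else 0)) := by
    intro j _
    rw [Finset.sum_congr rfl (fun P hP => by
      rw [(Finset.mem_powersetCard.1 hP).2, hA])]
    rw [Finset.sum_const, Finset.card_powersetCard, hA, smul_eq_mul]
  rw [Finset.sum_congr rfl hterm, hA]
  norm_num [Finset.sum_range_succ]

lemma bad_sum (G : SimpleGraph V) [DecidableRel G.Adj] (hreg : G.IsRegularOfDegree 14) :
    ∑ R : Finset V, 2 ^ R.card * 3 ^ (Fintype.card V - R.card)
        * (Finset.univ.filter (fun v => (G.neighborFinset v ∩ R).card ≤ 1)).card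
      = Fintype.card V * (31 * 3 ^ 13 * 5 ^ (Fintype.card V - 14)) := by
  have hdeg : ∀ v : V, (G.neighborFinset v).card = 14 := fun v => hreg v
  calc ∑ R : Finset V, 2 ^ R.card * 3 ^ (Fintype.card V - R.card)
        * (Finset.univ.filter (fun v => (G.neighborFinset v ∩ R).card ≤ 1)).card
      = ∑ R : Finset V, ∑ v : V, 2 ^ R.card * 3 ^ (Fintype.card V - R.card)
          * (if (R ∩ G.neighborFinset v).card ≤ 1 then 1 else 0) := by
        refine Finset.sum_congr rfl fun R _ => ?_
        rw [Finset.card_filter, ← Finset.mul_sum]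
        simp [Finset.inter_comm]
    _ = ∑ v : V, ∑ R : Finset V, 2 ^ R.card * 3 ^ (Fintype.card V - R.card)
          * (if (R ∩ G.neighborFinset v).card ≤ 1 then 1 else 0) := Finset.sum_comm
    _ = ∑ v : V, (31 * 3 ^ 13 * 5 ^ (Fintype.card V - 14)) := by
        refine Finset.sum_congr rfl fun v _ => ?_
        rw [split_sum (G.neighborFinset v) (fun P => if P.card ≤ 1 then 1 else 0)]
        rw [inner_bad_sum (G.neighborFinset v) (hdeg v), hdeg v]
    _ = Fintype.card V * (31 * 3 ^ 13 * 5 ^ (Fintype.card V - 14)) := by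
        rw [Finset.sum_const, smul_eq_mul, Finset.card_univ]

lemma key (G : SimpleGraph V) [DecidableRel G.Adj] (hreg : G.IsRegularOfDegree 14)
    [Nonempty V] :
    ∃ R : Finset V,
      2 * (R.card + 2 * (Finset.univ.filter
        (fun v => (G.neighborFinset v ∩ R).card ≤ 1)).card) ≤ Fintype.card V := by
  by_contra hcon
  push_neg at hcon
  obtain ⟨v0⟩ := ‹Nonempty V›
  have hn15 : 15 ≤ Fintype.card V := by
    have h14 : (G.neighborFinset v0).card = 14 := hreg v0
    have hle : (insert v0 (G.neighborFinset v0)).card ≤ Fintype.card V :=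
      Finset.card_le_univ _
    rw [Finset.card_insert_of_notMem (G.notMem_neighborFinset_self v0), h14] at hle
    exact hle
  set n := Fintype.card V with hn
  have hsum : ∑ R : Finset V, 2 ^ R.card * 3 ^ (n - R.card) * (n + 1)
      ≤ ∑ R : Finset V, 2 ^ R.card * 3 ^ (n - R.card)
          * (2 * (R.card + 2 * (Finset.univ.filter
              (fun v => (G.neighborFinset v ∩ R).card ≤ 1)).card)) :=
    Finset.sum_le_sum fun R _ => Nat.mul_le_mul_left _ (hcon R)
  have hL : ∑ R : Finset V, 2 ^ R.card * 3 ^ (n - R.card) * (n + 1)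
      = (n + 1) * 5 ^ n := by
    rw [← Finset.sum_mul, total_sum, mul_comm]
  have hRHS : ∑ R : Finset V, 2 ^ R.card * 3 ^ (n - R.card)
          * (2 * (R.card + 2 * (Finset.univ.filter
              (fun v => (G.neighborFinset v ∩ R).card ≤ 1)).card))
      = 2 * (n * (2 * 5 ^ (n - 1))) + 4 * (n * (31 * 3 ^ 13 * 5 ^ (n - 14))) := by
    have hsplit : ∀ R : Finset V,
        2 ^ R.card * 3 ^ (n - R.card)
          * (2 * (R.card + 2 * (Finset.univ.filter
              (fun v => (G.neighborFinset v ∩ R).card ≤ 1)).card))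
        = 2 * (2 ^ R.card * 3 ^ (n - R.card) * R.card)
          + 4 * (2 ^ R.card * 3 ^ (n - R.card)
              * (Finset.univ.filter (fun v => (G.neighborFinset v ∩ R).card ≤ 1)).card) := by
      intro R; ring
    rw [Finset.sum_congr rfl fun R _ => hsplit R, Finset.sum_add_distrib,
      ← Finset.mul_sum, ← Finset.mul_sum, card_sum, bad_sum G hreg]
  rw [hL, hRHS] at hsum
  have e1 : (5 : ℕ) ^ n = 5 ^ (n - 15) * 5 ^ 15 := by
    rw [← pow_add]; congr 1; omega
  have e2 : (5 : ℕ) ^ (n - 1) = 5 ^ (n - 15) * 5 ^ 14 := by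
    rw [← pow_add]; congr 1; omega
  have e3 : (5 : ℕ) ^ (n - 14) = 5 ^ (n - 15) * 5 ^ 1 := by
    rw [← pow_add]; congr 1; omega
  rw [e1, e2, e3] at hsum
  have main' : ((n + 1) * 5 ^ 15) * 5 ^ (n - 15)
      ≤ ((4 * 5 ^ 14 + 124 * 3 ^ 13 * 5) * n) * 5 ^ (n - 15) := by
    calc ((n + 1) * 5 ^ 15) * 5 ^ (n - 15) = (n + 1) * (5 ^ (n - 15) * 5 ^ 15) := by ring
      _ ≤ 2 * (n * (2 * (5 ^ (n - 15) * 5 ^ 14)))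
          + 4 * (n * (31 * 3 ^ 13 * (5 ^ (n - 15) * 5 ^ 1))) := hsum
      _ = ((4 * 5 ^ 14 + 124 * 3 ^ 13 * 5) * n) * 5 ^ (n - 15) := by ring
  have hfin := Nat.le_of_mul_le_mul_right main' (Nat.pow_pos (by norm_num))
  norm_num at hfin
  omega

end Main

theorem stmt14 {V : Type*} [Fintype V] [DecidableEq V] (G : SimpleGraph V) [DecidableRel G.Adj] (hreg : G.IsRegularOfDegree 14) :
    ∃ S : Finset V, IsAbDom G 2 2 S ∧ (S.card : ℝ) ≤ (Fintype.card V : ℝ) / 2 := by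
  cases isEmpty_or_nonempty V with
  | inl h =>
    refine ⟨∅, ⟨fun v hv => absurd hv (by simp), fun v _ => (h.false v).elim⟩, by simp⟩
  | inr h =>
    obtain ⟨R, hR⟩ := key G hreg
    set B := Finset.univ.filter (fun v => (G.neighborFinset v ∩ R).card ≤ 1) with hB
    have hpick : ∀ v : V, ∃ t ⊆ G.neighborFinset v, t.card = 2 := fun v =>
      Finset.exists_subset_card_eq (by rw [SimpleGraph.card_neighborFinset_eq_degree, hreg v]; norm_num)
    choose pick hpick_sub hpick_card using hpick
    set S := R ∪ B.biUnion pick with hS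
    have cover : ∀ v : V, 2 ≤ (G.neighborFinset v ∩ S).card := by
      intro v
      by_cases hv : (G.neighborFinset v ∩ R).card ≤ 1
      · have hvB : v ∈ B := Finset.mem_filter.2 ⟨Finset.mem_univ v, hv⟩
        have hsub : pick v ⊆ G.neighborFinset v ∩ S := fun x hx =>
          Finset.mem_inter.2 ⟨hpick_sub v hx,
            Finset.mem_union_right _ (Finset.mem_biUnion.2 ⟨v, hvB, hx⟩)⟩
        calc 2 = (pick v).card := (hpick_card v).symm
          _ ≤ _ := Finset.card_le_card hsub
      · push_neg at hv
        calc 2 ≤ (G.neighborFinset v ∩ R).card := hv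
          _ ≤ (G.neighborFinset v ∩ S).card :=
            Finset.card_le_card (Finset.inter_subset_inter_left Finset.subset_union_left)
    have hcardS : S.card ≤ R.card + 2 * B.card := by
      calc S.card ≤ R.card + (B.biUnion pick).card := Finset.card_union_le _ _
        _ ≤ R.card + ∑ v ∈ B, (pick v).card := by
          exact Nat.add_le_add_left (Finset.card_biUnion_le) _
        _ = R.card + 2 * B.card := by
          rw [Finset.sum_congr rfl fun v _ => hpick_card v, Finset.sum_const, smul_eq_mul,
            mul_comm]
    have h2S : 2 * S.card ≤ Fintype.card V := by
      calc 2 * S.card ≤ 2 * (R.card + 2 * B.card) := Nat.mul_le_mul_left _ hcardS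
        _ ≤ Fintype.card V := hR
    refine ⟨S, ⟨fun v _ => cover v, fun v _ => cover v⟩, ?_⟩
    rw [le_div_iff₀ (by norm_num : (0:ℝ) < 2)]
    have : ((2 * S.card : ℕ) : ℝ) ≤ ((Fintype.card V : ℕ) : ℝ) := Nat.cast_le.2 h2S
    push_cast at this ⊢
    linarith
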